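/- Let n ≥ 1 be an integer, C₀ > 0, C₁ > 0, M > 0, and h ∈ (0,1]. Let (a_α)_{α∈ℕⁿ} be complex numbers satisfying |a_α| ≤ C₀^{|α|}(h^{-1}+|α|)^{|α|}·M for every multi-index α ∈ ℕⁿ. Then for every ζ ∈ ℂⁿ with max_i |ζ_i| ≤ 1/(2 C₀(1+C₁) n e), the series ∑_{α∈ℕⁿ} a_α ζ^α / α! converges absolutely and |∑_{α∈ℕⁿ} a_α ζ^α / α!| ≤ M · ( exp( n C₀ (1+1/C₁) (max_i |ζ_i|) / h ) + 2ⁿ ). -/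

import Mathlib

/-- multinomial bound: `k! ≤ n^k * ∏ αᵢ!` -/
lemma aux_fact_le (n : ℕ) : ∀ α : Fin n → ℕ,
    (∑ i, α i).factorial ≤ n ^ (∑ i, α i) * ∏ i, (α i).factorial := by
  induction n with
  | zero => intro α; simp
  | succ n ih =>
    intro α
    rw [Fin.sum_univ_succ, Fin.prod_univ_succ]
    set s := ∑ i : Fin n, α i.succ with hs
    have h1 : Nat.choose (α 0 + s) (α 0) * (α 0).factorial * s.factorial
        = (α 0 + s).factorial := by
      have := Nat.choose_mul_factorial_mul_factorial (Nat.le_add_right (α 0) s)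
      simpa [Nat.add_sub_cancel_left] using this
    have h2 : s.factorial ≤ n ^ s * ∏ i : Fin n, (α i.succ).factorial := ih _
    have h3 : Nat.choose (α 0 + s) s * n ^ s ≤ (n + 1) ^ (α 0 + s) := by
      have hb : (n + 1) ^ (α 0 + s) = ∑ m ∈ Finset.range (α 0 + s + 1),
          n ^ m * 1 ^ (α 0 + s - m) * Nat.choose (α 0 + s) m := add_pow n 1 (α 0 + s)
      rw [hb]
      have hmem : s ∈ Finset.range (α 0 + s + 1) := by
        simp [Nat.lt_succ_iff]
      calc Nat.choose (α 0 + s) s * n ^ s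
          = n ^ s * 1 ^ (α 0 + s - s) * Nat.choose (α 0 + s) s := by ring
        _ ≤ _ := Finset.single_le_sum
            (f := fun m => n ^ m * 1 ^ (α 0 + s - m) * Nat.choose (α 0 + s) m)
            (fun m _ => Nat.zero_le _) hmem
    calc (α 0 + s).factorial
        = Nat.choose (α 0 + s) (α 0) * (α 0).factorial * s.factorial := h1.symm
      _ ≤ Nat.choose (α 0 + s) (α 0) * (α 0).factorial *
            (n ^ s * ∏ i : Fin n, (α i.succ).factorial) :=
          Nat.mul_le_mul_left _ h2
      _ = (Nat.choose (α 0 + s) s * n ^ s) *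
            ((α 0).factorial * ∏ i : Fin n, (α i.succ).factorial) := by
          rw [Nat.choose_symm_add]; ring
      _ ≤ (n + 1) ^ (α 0 + s) *
            ((α 0).factorial * ∏ i : Fin n, (α i.succ).factorial) :=
          Nat.mul_le_mul_right _ h3

/-- products of a summable nonnegative function over `Fin n → ℕ` -/
lemma aux_pi_tsum {g : ℕ → ℝ} (hg : ∀ k, 0 ≤ g k) (hs : Summable g) :
    ∀ n : ℕ, Summable (fun α : Fin n → ℕ => ∏ i, g (α i)) ∧
      (∑' α : Fin n → ℕ, ∏ i, g (α i)) = (∑' k, g k) ^ n := by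
  intro n
  induction n with
  | zero =>
    constructor
    · exact Summable.of_finite
    · rw [tsum_eq_single (default : Fin 0 → ℕ) (fun b hb =>
        absurd (Subsingleton.elim b default) hb)]
      simp
  | succ n ih =>
    have hgn : (fun k => ‖g k‖) = g := funext fun k => Real.norm_of_nonneg (hg k)
    have hGn : (fun α : Fin n → ℕ => ‖∏ i, g (α i)‖) = fun α => ∏ i, g (α i) :=
      funext fun α => Real.norm_of_nonneg (Finset.prod_nonneg fun i _ => hg _)
    have hF : Summable (fun p : ℕ × (Fin n → ℕ) => g p.1 * ∏ i, g (p.2 i)) :=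
      Summable.mul_of_nonneg (f := g) (g := fun α : Fin n → ℕ => ∏ i, g (α i))
        hs ih.1 (fun k => hg k) (fun α => Finset.prod_nonneg fun i _ => hg _)
    set e := (Fin.consEquiv fun _ : Fin (n + 1) => ℕ).symm with he
    have hcomp : ∀ α : Fin (n + 1) → ℕ,
        (∏ i, g (α i)) = g ((e α).1) * ∏ i, g ((e α).2 i) := by
      intro α; rw [Fin.prod_univ_succ]; rfl
    constructor
    · have : (fun α : Fin (n + 1) → ℕ => ∏ i, g (α i)) =
          (fun p : ℕ × (Fin n → ℕ) => g p.1 * ∏ i, g (p.2 i)) ∘ e := funext hcomp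
      rw [this]
      exact e.summable_iff.mpr hF
    · calc (∑' α : Fin (n + 1) → ℕ, ∏ i, g (α i))
          = ∑' α : Fin (n + 1) → ℕ, (g ((e α).1) * ∏ i, g ((e α).2 i)) :=
            tsum_congr hcomp
        _ = ∑' p : ℕ × (Fin n → ℕ), (g p.1 * ∏ i, g (p.2 i)) :=
            e.tsum_eq (fun p : ℕ × (Fin n → ℕ) => g p.1 * ∏ i, g (p.2 i))
        _ = (∑' k, g k) * (∑' α : Fin n → ℕ, ∏ i, g (α i)) := by
            refine (tsum_mul_tsum_of_summable_norm (f := g)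
              (g := fun α : Fin n → ℕ => ∏ i, g (α i)) ?_ ?_).symm
            · rwa [hgn]
            · rw [hGn]; exact ih.1
        _ = (∑' k, g k) ^ (n + 1) := by rw [ih.2, pow_succ]; ring

theorem stmt10 (n : ℕ) (hn : 1 ≤ n) (C₀ C₁ M h : ℝ)
    (hC₀ : 0 < C₀) (hC₁ : 0 < C₁) (hM : 0 < M) (hh : h ∈ Set.Ioc (0:ℝ) 1)
    (a : (Fin n → ℕ) → ℂ)
    (ha : ∀ α : Fin n → ℕ, norm (a α) ≤
      C₀ ^ (∑ i, α i) * (h⁻¹ + ((∑ i, α i : ℕ) : ℝ)) ^ (∑ i, α i) * M)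
    (ζ : Fin n → ℂ)
    (hζ : (⨆ i, norm (ζ i)) ≤ 1 / (2 * C₀ * (1 + C₁) * (n : ℝ) * Real.exp 1)) :
    Summable (fun α : Fin n → ℕ =>
      norm (a α * (∏ i, ζ i ^ α i) / (∏ i, ((α i).factorial : ℂ)))) ∧
    norm (∑' α : Fin n → ℕ, a α * (∏ i, ζ i ^ α i) / (∏ i, ((α i).factorial : ℂ)))
      ≤ M * (Real.exp ((n : ℝ) * C₀ * (1 + 1 / C₁) * (⨆ i, norm (ζ i)) / h) + 2 ^ n) := by
  obtain ⟨hh0, hh1⟩ := hh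
  have hn0 : (0:ℝ) < n := by exact_mod_cast hn
  have he1 : (0:ℝ) < Real.exp 1 := Real.exp_pos 1
  have hc1 : (0:ℝ) < 1 + 1 / C₁ := by
    have := one_div_pos.2 hC₁; linarith
  have hc2 : (0:ℝ) < 1 + C₁ := by linarith
  have hinv : (0:ℝ) ≤ h⁻¹ := inv_nonneg.2 hh0.le
  set r := ⨆ i, norm (ζ i) with hrdef
  have hri : ∀ i, norm (ζ i) ≤ r :=
    fun i => le_ciSup (f := fun i => norm (ζ i))
      (Set.Finite.bddAbove (Set.finite_range _)) i
  have hr0 : (0:ℝ) ≤ r := le_trans (norm_nonneg _) (hri ⟨0, hn⟩)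
  have hsmall : C₀ * (1 + C₁) * (n:ℝ) * Real.exp 1 * r ≤ 1 / 2 := by
    have hY : (0:ℝ) < C₀ * (1 + C₁) * (n:ℝ) * Real.exp 1 :=
      mul_pos (mul_pos (mul_pos hC₀ hc2) hn0) he1
    calc C₀ * (1 + C₁) * (n:ℝ) * Real.exp 1 * r
        ≤ C₀ * (1 + C₁) * (n:ℝ) * Real.exp 1 *
            (1 / (2 * C₀ * (1 + C₁) * (n:ℝ) * Real.exp 1)) :=
          mul_le_mul_of_nonneg_left hζ hY.le
      _ = 1 / 2 := by field_simp
  set A := C₀ * (1 + 1 / C₁) * r / h with hAdef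
  have hA0 : (0:ℝ) ≤ A :=
    div_nonneg (mul_nonneg (mul_nonneg hC₀.le hc1.le) hr0) hh0.le
  -- termwise bound
  have hterm : ∀ α : Fin n → ℕ,
      norm (a α * (∏ i, ζ i ^ α i) / (∏ i, ((α i).factorial : ℂ)))
        ≤ M * (∏ i, A ^ (α i) / ((α i).factorial : ℝ))
          + M * ∏ i, ((1:ℝ) / 2) ^ (α i) := by
    intro α
    set k := ∑ i, α i with hk
    have hPpos : (0:ℝ) < ∏ i, ((α i).factorial : ℝ) :=
      Finset.prod_pos fun i _ => by exact_mod_cast (α i).factorial_pos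
    set P := ∏ i, ((α i).factorial : ℝ) with hP
    have habs : norm (a α * (∏ i, ζ i ^ α i) / (∏ i, ((α i).factorial : ℂ)))
        = norm (a α) * (∏ i, norm (ζ i) ^ α i) / P := by
      rw [hP, norm_div, norm_mul]
      congr 1
      · congr 1
        rw [norm_prod]
        exact Finset.prod_congr rfl fun i _ => norm_pow _ _
      · rw [norm_prod]
        exact Finset.prod_congr rfl fun i _ => Complex.norm_natCast _
    have hzr : (∏ i, norm (ζ i) ^ α i) ≤ r ^ k := by
      rw [hk, ← Finset.prod_pow_eq_pow_sum]
      exact Finset.prod_le_prod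
        (fun i _ => pow_nonneg (norm_nonneg _) _)
        (fun i _ => pow_le_pow_left₀ (norm_nonneg _) (hri i) _)
    have hsplit : (h⁻¹ + (k:ℝ)) ^ k ≤ ((1 + 1 / C₁) * h⁻¹) ^ k
        + ((1 + C₁) * (k:ℝ)) ^ k := by
      have hbase : (0:ℝ) ≤ h⁻¹ + (k:ℝ) := add_nonneg hinv (Nat.cast_nonneg _)
      rcases le_or_gt (k:ℝ) (h⁻¹ / C₁) with hc | hc
      · have e1 : (1 + 1 / C₁) * h⁻¹ = h⁻¹ + h⁻¹ / C₁ := by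
          field_simp
        have h1 : h⁻¹ + (k:ℝ) ≤ (1 + 1 / C₁) * h⁻¹ := by rw [e1]; linarith
        calc (h⁻¹ + (k:ℝ)) ^ k ≤ ((1 + 1 / C₁) * h⁻¹) ^ k :=
              pow_le_pow_left₀ hbase h1 k
          _ ≤ _ := le_add_of_nonneg_right
              (pow_nonneg (mul_nonneg hc2.le (Nat.cast_nonneg _)) _)
      · have h2 : h⁻¹ + (k:ℝ) ≤ (1 + C₁) * (k:ℝ) := by
          have := (div_lt_iff₀ hC₁).1 hc
          nlinarith
        calc (h⁻¹ + (k:ℝ)) ^ k ≤ ((1 + C₁) * (k:ℝ)) ^ k :=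
              pow_le_pow_left₀ hbase h2 k
          _ ≤ _ := le_add_of_nonneg_left
              (pow_nonneg (mul_nonneg hc1.le hinv) _)
    have hka : norm (a α) ≤ C₀ ^ k * (h⁻¹ + (k:ℝ)) ^ k * M := ha α
    have habs0 : (0:ℝ) ≤ ∏ i, norm (ζ i) ^ α i :=
      Finset.prod_nonneg fun i _ => pow_nonneg (norm_nonneg _) _
    have hCnn : (0:ℝ) ≤ C₀ ^ k * (h⁻¹ + (k:ℝ)) ^ k * M :=
      mul_nonneg (mul_nonneg (pow_nonneg hC₀.le _)
        (pow_nonneg (add_nonneg hinv (Nat.cast_nonneg _)) _)) hM.le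
    -- second-piece auxiliary bounds
    have hkk : ((k:ℝ)) ^ k ≤ Real.exp 1 ^ k * (k.factorial : ℝ) := by
      have hkf : (0:ℝ) < (k.factorial : ℝ) := by exact_mod_cast k.factorial_pos
      have h4 : ((k:ℝ)) ^ k / (k.factorial : ℝ) ≤ Real.exp (k:ℝ) := by
        refine le_trans ?_ (Real.sum_le_exp_of_nonneg (Nat.cast_nonneg k) (k + 1))
        exact Finset.single_le_sum (f := fun j => (k:ℝ) ^ j / (j.factorial : ℝ))
          (fun j _ => by positivity) (Finset.self_mem_range_succ k)
      have h5 : Real.exp (k:ℝ) = Real.exp 1 ^ k := by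
        rw [← Real.exp_nat_mul]; norm_num
      rw [h5] at h4
      calc ((k:ℝ)) ^ k = ((k:ℝ)) ^ k / (k.factorial : ℝ) * (k.factorial : ℝ) := by
            field_simp
        _ ≤ Real.exp 1 ^ k * (k.factorial : ℝ) :=
            mul_le_mul_of_nonneg_right h4 hkf.le
    have hfP : (k.factorial : ℝ) ≤ (n:ℝ) ^ k * P := by
      rw [hP, hk]
      exact_mod_cast aux_fact_le n α
    have hkk2 : ((k:ℝ)) ^ k ≤ Real.exp 1 ^ k * ((n:ℝ) ^ k * P) :=
      le_trans hkk (mul_le_mul_of_nonneg_left hfP (pow_nonneg he1.le _))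
    have hB : (C₀ * (1 + C₁) * r) ^ k * ((k:ℝ)) ^ k / P ≤ ((1:ℝ) / 2) ^ k := by
      have hBn : (0:ℝ) ≤ C₀ * (1 + C₁) * r :=
        mul_nonneg (mul_nonneg hC₀.le hc2.le) hr0
      calc (C₀ * (1 + C₁) * r) ^ k * ((k:ℝ)) ^ k / P
          ≤ (C₀ * (1 + C₁) * r) ^ k * (Real.exp 1 ^ k * ((n:ℝ) ^ k * P)) / P := by
            apply div_le_div_of_nonneg_right ?_ hPpos.le
            exact mul_le_mul_of_nonneg_left hkk2 (pow_nonneg hBn _)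
        _ = (C₀ * (1 + C₁) * (n:ℝ) * Real.exp 1 * r) ^ k := by
            rw [div_eq_iff hPpos.ne',
              show C₀ * (1 + C₁) * (n:ℝ) * Real.exp 1 * r
                = C₀ * (1 + C₁) * r * (Real.exp 1 * (n:ℝ)) by ring,
              mul_pow (C₀ * (1 + C₁) * r) (Real.exp 1 * (n:ℝ)) k,
              mul_pow (Real.exp 1) ((n:ℝ)) k]
            ring
        _ ≤ ((1:ℝ) / 2) ^ k := by
            apply pow_le_pow_left₀ ?_ hsmall
            exact mul_nonneg (mul_nonneg (mul_nonneg
              (mul_nonneg hC₀.le hc2.le) hn0.le) he1.le) hr0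
    have e2 : A ^ k / P = ∏ i, A ^ (α i) / ((α i).factorial : ℝ) := by
      rw [Finset.prod_div_distrib, Finset.prod_pow_eq_pow_sum]
    have e3 : ((1:ℝ) / 2) ^ k = ∏ i, ((1:ℝ) / 2) ^ (α i) := by
      rw [Finset.prod_pow_eq_pow_sum]
    rw [habs, ← e2, ← e3]
    calc norm (a α) * (∏ i, norm (ζ i) ^ α i) / P
        ≤ (C₀ ^ k * (h⁻¹ + (k:ℝ)) ^ k * M) * r ^ k / P := by
          apply div_le_div_of_nonneg_right ?_ hPpos.le
          exact mul_le_mul hka hzr habs0 hCnn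
      _ ≤ (C₀ ^ k * (((1 + 1 / C₁) * h⁻¹) ^ k + ((1 + C₁) * (k:ℝ)) ^ k) * M)
            * r ^ k / P := by
          apply div_le_div_of_nonneg_right ?_ hPpos.le
          apply mul_le_mul_of_nonneg_right ?_ (pow_nonneg hr0 _)
          apply mul_le_mul_of_nonneg_right ?_ hM.le
          exact mul_le_mul_of_nonneg_left hsplit (pow_nonneg hC₀.le _)
      _ = M * (A ^ k / P) + M * ((C₀ * (1 + C₁) * r) ^ k * ((k:ℝ)) ^ k / P) := by
          have eA : A ^ k = C₀ ^ k * ((1 + 1 / C₁) * h⁻¹) ^ k * r ^ k := by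
            rw [hAdef, div_eq_mul_inv,
              show C₀ * (1 + 1 / C₁) * r * h⁻¹ = C₀ * ((1 + 1 / C₁) * h⁻¹) * r by ring,
              mul_pow, mul_pow]
          have eB : (C₀ * (1 + C₁) * r) ^ k * ((k:ℝ)) ^ k
              = C₀ ^ k * ((1 + C₁) * (k:ℝ)) ^ k * r ^ k := by
            rw [← mul_pow,
              show C₀ * (1 + C₁) * r * (k:ℝ) = C₀ * ((1 + C₁) * (k:ℝ)) * r by ring,
              mul_pow, mul_pow]
          rw [eA, eB]
          ring
      _ ≤ M * (A ^ k / P) + M * ((1:ℝ) / 2) ^ k :=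
          add_le_add_right (mul_le_mul_of_nonneg_left hB hM.le) _
  -- summability of the bounding function
  have hg1 : ∀ k : ℕ, 0 ≤ A ^ k / (k.factorial : ℝ) := fun k => by positivity
  have hs1 := aux_pi_tsum hg1 (Real.summable_pow_div_factorial A) n
  have hg2 : ∀ k : ℕ, 0 ≤ ((1:ℝ) / 2) ^ k := fun k => by positivity
  have hs2 := aux_pi_tsum hg2 summable_geometric_two n
  have hsum1 : Summable (fun α : Fin n → ℕ =>
      M * ∏ i, A ^ (α i) / ((α i).factorial : ℝ)) := hs1.1.mul_left M
  have hsum2 : Summable (fun α : Fin n → ℕ =>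
      M * ∏ i, ((1:ℝ) / 2) ^ (α i)) := hs2.1.mul_left M
  have hbsum : Summable (fun α : Fin n → ℕ =>
      M * (∏ i, A ^ (α i) / ((α i).factorial : ℝ))
        + M * ∏ i, ((1:ℝ) / 2) ^ (α i)) := hsum1.add hsum2
  have habs_sum : Summable (fun α : Fin n → ℕ =>
      norm (a α * (∏ i, ζ i ^ α i) / (∏ i, ((α i).factorial : ℂ)))) :=
    Summable.of_nonneg_of_le (fun α => norm_nonneg _) hterm hbsum
  refine ⟨habs_sum, ?_⟩
  have hnorm : norm (∑' α : Fin n → ℕ,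
      a α * (∏ i, ζ i ^ α i) / (∏ i, ((α i).factorial : ℂ)))
      ≤ ∑' α : Fin n → ℕ,
        norm (a α * (∏ i, ζ i ^ α i) / (∏ i, ((α i).factorial : ℂ))) := by
    have := norm_tsum_le_tsum_norm (f := fun α : Fin n → ℕ =>
      a α * (∏ i, ζ i ^ α i) / (∏ i, ((α i).factorial : ℂ)))
      (by simpa using habs_sum)
    simpa using this
  refine le_trans hnorm (le_trans (Summable.tsum_le_tsum hterm habs_sum hbsum) ?_)
  have hexpA : (∑' k : ℕ, A ^ k / (k.factorial : ℝ)) = Real.exp A := by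
    rw [Real.exp_eq_exp_ℝ, NormedSpace.exp_eq_tsum_div]
  have ht1 : (∑' α : Fin n → ℕ, M * ∏ i, A ^ (α i) / ((α i).factorial : ℝ))
      = M * Real.exp A ^ n := by
    rw [tsum_mul_left, hs1.2, hexpA]
  have ht2 : (∑' α : Fin n → ℕ, M * ∏ i, ((1:ℝ) / 2) ^ (α i)) = M * 2 ^ n := by
    rw [tsum_mul_left, hs2.2, tsum_geometric_two]
  rw [Summable.tsum_add hsum1 hsum2, ht1, ht2]
  have hexp : Real.exp A ^ n = Real.exp ((n:ℝ) * C₀ * (1 + 1 / C₁) * r / h) := by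
    rw [← Real.exp_nat_mul]
    congr 1
    rw [hAdef]
    ring
  rw [hexp]
  exact le_of_eq (by ring)
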